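/- For every integer k ≥ 1 and every real α ≥ 1, the univariate Jackson-type kernel J_k(x) := c_k sinc^{2k}(x/(2kπα)), where c_k := (∫_ℝ sinc^{2k}(u/(2kπα)) du)^{−1}, satisfies ∑_{j ∈ ℤ} J_k(y − j) = 1 for every y ∈ ℝ. -/

import Mathlib

set_option maxHeartbeats 1000000

open MeasureTheory Filter

open Real in
/-- The cardinal sine function `sinc x = sin (π x) / (π x)`, with `sinc 0 = 1`. -/
noncomputable def sinc (x : ℝ) : ℝ :=
  if x = 0 then 1 else Real.sin (π * x) / (π * x)

open Real in
/-- The univariate Fejér kernel. -/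
noncomputable def fejer (x : ℝ) : ℝ := (1 / 2) * _root_.sinc (x / 2) ^ 2

open Real in
/-- The univariate Jackson-type kernel of order `k` with parameter `α`. -/
noncomputable def jackson (k : ℕ) (α : ℝ) (x : ℝ) : ℝ :=
  (∫ u : ℝ, _root_.sinc (u / (2 * k * π * α)) ^ (2 * k))⁻¹ * _root_.sinc (x / (2 * k * π * α)) ^ (2 * k)

open Real hiding sinc sinc_zero abs_sinc_le_one continuous_sinc
open Complex
open scoped FourierTransform Convolution

/-! ### Basic properties of `sinc` -/

lemma sinc_zero : sinc 0 = 1 := by simp [sinc]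

lemma sinc_of_ne (x : ℝ) (hx : x ≠ 0) : sinc x = Real.sin (π * x) / (π * x) := by
  simp [sinc, hx]

lemma continuous_sinc : Continuous sinc := by
  rw [continuous_iff_continuousAt]
  intro x
  rcases ne_or_eq x 0 with hx | rfl
  · have hπx : π * x ≠ 0 := mul_ne_zero pi_ne_zero hx
    have hc : ContinuousAt (fun y => Real.sin (π * y) / (π * y)) x :=
      ContinuousAt.div (Real.continuous_sin.comp (continuous_const.mul continuous_id)).continuousAt
        (continuous_const.mul continuous_id).continuousAt hπx
    apply hc.congr
    filter_upwards [eventually_ne_nhds hx] with y hy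
    simp [sinc_of_ne y hy]
  · have h1 : Tendsto (fun y : ℝ => Real.sin y / y) (nhdsWithin 0 {0}ᶜ) (nhds 1) := by
      have := (Real.hasDerivAt_sin 0)
      rw [hasDerivAt_iff_tendsto_slope] at this
      rw [Real.cos_zero] at this
      apply this.congr
      intro y
      simp [slope_def_field]
    have h2 : Tendsto (fun y : ℝ => π * y) (nhdsWithin 0 {0}ᶜ) (nhdsWithin 0 {0}ᶜ) := by
      rw [tendsto_nhdsWithin_iff]
      constructor
      · have := (continuous_const.mul continuous_id : Continuous fun y : ℝ => π * y).tendsto 0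
        simpa only [Pi.mul_def, mul_zero] using this.mono_left nhdsWithin_le_nhds
      · filter_upwards [self_mem_nhdsWithin] with y hy
        exact Set.mem_compl_singleton_iff.2 (mul_ne_zero pi_ne_zero hy)
    have h3 : Tendsto sinc (nhdsWithin 0 {0}ᶜ) (nhds 1) := by
      refine (h1.comp h2).congr' ?_
      filter_upwards [self_mem_nhdsWithin] with y hy
      simp [sinc_of_ne y hy]
    have h4 : Tendsto sinc (pure (0:ℝ)) (nhds 1) := by
      simpa [sinc_zero] using tendsto_pure_nhds sinc 0
    have h5 : Tendsto sinc (nhdsWithin 0 {0}ᶜ ⊔ pure 0) (nhds 1) := tendsto_sup.2 ⟨h3, h4⟩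
    rw [nhdsNE_sup_pure] at h5
    simpa [ContinuousAt, sinc_zero] using h5

lemma abs_sinc_le_one (x : ℝ) : |sinc x| ≤ 1 := by
  rcases eq_or_ne x 0 with rfl | hx
  · simp [sinc_zero]
  · rw [sinc_of_ne x hx, abs_div]
    rw [div_le_one (abs_pos.2 (mul_ne_zero pi_ne_zero hx))]
    exact Real.abs_sin_le_abs

lemma sinc_sq_le_one (x : ℝ) : sinc x ^ 2 ≤ 1 :=
  (sq_le_one_iff_abs_le_one (sinc x)).2 (abs_sinc_le_one x)

lemma sinc_sq_mul_le (x : ℝ) : sinc x ^ 2 * (π * x) ^ 2 ≤ 1 := by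
  rcases eq_or_ne x 0 with rfl | hx
  · simp
  · have hπx : π * x ≠ 0 := mul_ne_zero pi_ne_zero hx
    rw [sinc_of_ne x hx, div_pow, div_mul_cancel₀ _ (pow_ne_zero 2 hπx)]
    simpa [sq_abs] using (sq_le_one_iff_abs_le_one (Real.sin (π * x))).2 (Real.abs_sin_le_one _)

/-! ### The rectangle function and its Fourier transform -/

noncomputable def bump (c : ℝ) : ℝ → ℂ :=
  Set.indicator (Set.Icc (-(1/(2*c))) (1/(2*c))) (fun _ => (1:ℂ))

lemma integrable_bump (c : ℝ) : Integrable (bump c) := by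
  unfold bump
  rw [integrable_indicator_iff measurableSet_Icc]
  exact integrableOn_const measure_Icc_lt_top.ne

lemma fourier_bump (c : ℝ) (hc : 0 < c) (w : ℝ) :
    𝓕 (bump c) w = ((c⁻¹ * sinc (w / c) : ℝ) : ℂ) := by
  have ha0 : (0:ℝ) ≤ 1/(2*c) := by positivity
  have hle : -(1/(2*c)) ≤ 1/(2*c) := by linarith
  rw [Real.fourier_real_eq_integral_exp_smul]
  have h1 : ∀ v : ℝ, Complex.exp (↑(-2*π*v*w) * Complex.I) • bump c v
      = Set.indicator (Set.Icc (-(1/(2*c))) (1/(2*c)))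
        (fun v => Complex.exp (↑(-2*π*v*w) * Complex.I)) v := by
    intro v
    by_cases h : v ∈ Set.Icc (-(1/(2*c))) (1/(2*c))
    · rw [bump, Set.indicator_of_mem h, Set.indicator_of_mem h]
      simp
    · rw [bump, Set.indicator_of_notMem h, Set.indicator_of_notMem h]
      simp
  simp_rw [h1]
  rw [MeasureTheory.integral_indicator measurableSet_Icc,
    MeasureTheory.integral_Icc_eq_integral_Ioc, ← intervalIntegral.integral_of_le hle]
  rcases eq_or_ne w 0 with rfl | hw
  · simp only [mul_zero, Complex.ofReal_zero, zero_mul, Complex.exp_zero]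
    rw [intervalIntegral.integral_const]
    rw [zero_div, sinc_zero]
    push_cast
    rw [sub_neg_eq_add]
    field_simp
    simp [Complex.real_smul]
    rw [one_add_one_eq_two, div_mul_eq_div_div, div_self two_ne_zero, one_div]
  · have hC : (((-2*π*w : ℝ) : ℂ) * Complex.I) ≠ 0 := by
      apply mul_ne_zero _ Complex.I_ne_zero
      simpa using mul_ne_zero (mul_ne_zero (by norm_num : (-2:ℝ) ≠ 0) Real.pi_ne_zero) hw
    have h2 : ∀ v : ℝ, (↑(-2*π*v*w) * Complex.I : ℂ)
        = (((-2*π*w : ℝ) : ℂ) * Complex.I) * (v : ℂ) := by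
      intro v; push_cast; ring
    simp_rw [h2]
    rw [integral_exp_mul_complex hC]
    have hwc : w / c ≠ 0 := div_ne_zero hw hc.ne'
    rw [sinc_of_ne _ hwc]
    have e1 : (((-2*π*w : ℝ) : ℂ) * Complex.I) * ((1/(2*c) : ℝ) : ℂ)
        = ((-(π * (w/c)) : ℝ) : ℂ) * Complex.I := by
      push_cast
      have : (c:ℂ) ≠ 0 := Complex.ofReal_ne_zero.2 hc.ne'
      field_simp
    have e2 : (((-2*π*w : ℝ) : ℂ) * Complex.I) * ((-(1/(2*c)) : ℝ) : ℂ)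
        = (((π * (w/c)) : ℝ) : ℂ) * Complex.I := by
      push_cast
      have : (c:ℂ) ≠ 0 := Complex.ofReal_ne_zero.2 hc.ne'
      field_simp
    rw [e1, e2]
    have key : ∀ x : ℝ, Complex.exp ((x:ℂ) * Complex.I)
        = ((Real.cos x : ℝ) : ℂ) + ((Real.sin x : ℝ) : ℂ) * Complex.I := by
      intro x
      rw [Complex.exp_mul_I, Complex.ofReal_cos, Complex.ofReal_sin]
    rw [key, key]
    rw [div_eq_iff hC]
    push_cast
    rw [Complex.cos_neg, Complex.sin_neg]
    have hπ : (π : ℂ) ≠ 0 := Complex.ofReal_ne_zero.2 Real.pi_ne_zero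
    have hcC : (c:ℂ) ≠ 0 := Complex.ofReal_ne_zero.2 hc.ne'
    have hwC : (w:ℂ) ≠ 0 := Complex.ofReal_ne_zero.2 hw
    field_simp
    ring

/-! ### Fourier transform of a convolution -/

lemma fourier_conv (f g : ℝ → ℂ) (hf : Integrable f) (hg : Integrable g) (w : ℝ) :
    𝓕 (f ⋆[ContinuousLinearMap.mul ℂ ℂ] g) w = 𝓕 f w * 𝓕 g w := by
  have hint : Integrable (fun p : ℝ × ℝ => f p.2 * g (p.1 - p.2))
      ((volume : Measure ℝ).prod volume) := by
    simpa using hf.convolution_integrand (ContinuousLinearMap.mul ℂ ℂ) hg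
  have hcont : Continuous (fun p : ℝ × ℝ => Complex.exp (↑(-2*π*p.1*w) * Complex.I)) := by
    apply Complex.continuous_exp.comp
    apply Continuous.mul _ continuous_const
    apply Complex.continuous_ofReal.comp
    fun_prop
  have hint2 : Integrable (fun p : ℝ × ℝ =>
      Complex.exp (↑(-2*π*p.1*w) * Complex.I) * (f p.2 * g (p.1 - p.2)))
      ((volume : Measure ℝ).prod volume) :=
    hint.bdd_mul (c := 1) hcont.aestronglyMeasurable
      (Filter.Eventually.of_forall fun p => le_of_eq (Complex.norm_exp_ofReal_mul_I _))
  rw [Real.fourier_real_eq_integral_exp_smul]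
  simp_rw [convolution_def, ContinuousLinearMap.mul_apply', smul_eq_mul,
    ← MeasureTheory.integral_const_mul]
  rw [MeasureTheory.integral_integral_swap (by exact hint2)]
  have inner : ∀ t : ℝ, (∫ x : ℝ, Complex.exp (↑(-2*π*x*w) * Complex.I) * (f t * g (x - t)))
      = (Complex.exp (↑(-2*π*t*w) * Complex.I) * f t) * 𝓕 g w := by
    intro t
    have rearr : ∀ x : ℝ, Complex.exp (↑(-2*π*x*w) * Complex.I) * (f t * g (x - t))
        = f t * (Complex.exp (↑(-2*π*x*w) * Complex.I) * g (x - t)) := fun x => by ring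
    simp_rw [rearr]
    rw [MeasureTheory.integral_const_mul]
    rw [← MeasureTheory.integral_add_right_eq_self
      (fun x : ℝ => Complex.exp (↑(-2*π*x*w) * Complex.I) * g (x - t)) t]
    simp only [add_sub_cancel_right]
    have he : ∀ u : ℝ, Complex.exp (↑(-2*π*(u+t)*w) * Complex.I)
        = Complex.exp (↑(-2*π*t*w) * Complex.I) * Complex.exp (↑(-2*π*u*w) * Complex.I) := by
      intro u
      rw [← Complex.exp_add]
      congr 1
      push_cast
      ring
    simp_rw [he]
    have rearr2 : ∀ u : ℝ, Complex.exp (↑(-2*π*t*w) * Complex.I)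
          * Complex.exp (↑(-2*π*u*w) * Complex.I) * g u
        = Complex.exp (↑(-2*π*t*w) * Complex.I)
          * (Complex.exp (↑(-2*π*u*w) * Complex.I) * g u) := fun u => by ring
    simp_rw [rearr2]
    rw [MeasureTheory.integral_const_mul]
    rw [Real.fourier_real_eq_integral_exp_smul]
    simp_rw [smul_eq_mul]
    ring
  simp_rw [inner]
  rw [MeasureTheory.integral_mul_const]
  congr 1
  rw [Real.fourier_real_eq_integral_exp_smul]
  simp_rw [smul_eq_mul]

/-! ### Convolution powers of the rectangle function -/

noncomputable def convPow (φ : ℝ → ℂ) : ℕ → ℝ → ℂ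
  | 0 => φ
  | m+1 => (convPow φ m) ⋆[ContinuousLinearMap.mul ℂ ℂ] φ

lemma integrable_convPow (c : ℝ) : ∀ m, Integrable (convPow (bump c) m)
  | 0 => integrable_bump c
  | (m+1) => (integrable_convPow c m).integrable_convolution
      (ContinuousLinearMap.mul ℂ ℂ) (integrable_bump c)

lemma fourier_convPow (c : ℝ) (hc : 0 < c) :
    ∀ m, ∀ w : ℝ, 𝓕 (convPow (bump c) m) w = (((c⁻¹ * sinc (w / c) : ℝ)) : ℂ) ^ (m+1)
  | 0, w => by simpa [convPow] using fourier_bump c hc w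
  | (m+1), w => by
    rw [convPow, fourier_conv _ _ (integrable_convPow c m) (integrable_bump c) w,
      fourier_convPow c hc m w, fourier_bump c hc w]
    ring

lemma support_convPow (c : ℝ) :
    ∀ m, Function.support (convPow (bump c) m)
      ⊆ Set.Icc (-((m+1) * (1/(2*c)))) ((m+1) * (1/(2*c)))
  | 0 => by
    refine (Set.support_indicator_subset).trans ?_
    apply Set.Icc_subset_Icc <;> norm_num
  | (m+1) => by
    refine (support_convolution_subset _).trans ?_
    refine (Set.add_subset_add (support_convPow c m) (support_convPow c 0)).trans ?_
    refine (Set.Icc_add_Icc_subset _ _ _ _).trans ?_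
    apply Set.Icc_subset_Icc <;> push_cast <;> ring_nf <;> rfl
section Part2
variable {c : ℝ} {k : ℕ}

lemma G_nonneg (c : ℝ) (k : ℕ) (x : ℝ) : 0 ≤ sinc (x/c) ^ (2*k) := by
  rw [pow_mul]; positivity

lemma G_le_one (c : ℝ) (k : ℕ) (x : ℝ) : sinc (x/c) ^ (2*k) ≤ 1 := by
  rw [pow_mul]
  exact pow_le_one₀ (sq_nonneg _) (sinc_sq_le_one _)

lemma G_le_sq (c : ℝ) (hk : 1 ≤ k) (x : ℝ) : sinc (x/c) ^ (2*k) ≤ sinc (x/c) ^ 2 := by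
  rw [pow_mul]
  calc (sinc (x/c)^2)^k ≤ (sinc (x/c)^2)^1 :=
        pow_le_pow_of_le_one (sq_nonneg _) (sinc_sq_le_one _) hk
  _ = sinc (x/c)^2 := pow_one _

lemma G_cont (c : ℝ) (k : ℕ) : Continuous fun x : ℝ => sinc (x/c) ^ (2*k) :=
  (continuous_sinc.comp (continuous_id.div_const c)).pow _

lemma G_sq_bound (hc : 0 < c) (x : ℝ) : sinc (x/c)^2 * x^2 ≤ c^2/π^2 := by
  have h := sinc_sq_mul_le (x/c)
  have hπ2 : (0:ℝ) < π^2 := by positivity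
  rw [le_div_iff₀ hπ2]
  have expand : sinc (x/c)^2 * (π * (x/c))^2 = sinc (x/c)^2 * x^2 * π^2 / c^2 := by
    field_simp
  rw [expand] at h
  calc sinc (x/c)^2 * x^2 * π^2
      = (sinc (x/c)^2 * x^2 * π^2 / c^2) * c^2 := by field_simp
  _ ≤ 1 * c^2 := mul_le_mul_of_nonneg_right h (sq_nonneg c)
  _ = c^2 := one_mul _

lemma integrable_G (hc : 0 < c) (hk : 1 ≤ k) :
    Integrable (fun x : ℝ => sinc (x/c) ^ (2*k)) := by
  apply (integrable_inv_one_add_sq.const_mul (1 + c^2/π^2)).mono'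
    (G_cont c k).aestronglyMeasurable
  filter_upwards with x
  rw [Real.norm_eq_abs, _root_.abs_of_nonneg (G_nonneg c k x)]
  have h1 : sinc (x/c)^(2*k) ≤ 1 := G_le_one c k x
  have h2 : sinc (x/c)^(2*k) * x^2 ≤ c^2/π^2 := by
    calc sinc (x/c)^(2*k) * x^2 ≤ sinc (x/c)^2 * x^2 :=
          mul_le_mul_of_nonneg_right (G_le_sq c hk x) (sq_nonneg x)
    _ ≤ c^2/π^2 := G_sq_bound hc x
  have hpos : (0:ℝ) < 1 + x^2 := by positivity
  rw [← div_eq_mul_inv, le_div_iff₀ hpos, mul_add, mul_one]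
  linarith

lemma integral_G_pos (hc : 0 < c) (hk : 1 ≤ k) :
    0 < ∫ x : ℝ, sinc (x/c) ^ (2*k) := by
  rw [integral_pos_iff_support_of_nonneg (fun x => G_nonneg c k x) (integrable_G hc hk)]
  have hopen : IsOpen (Function.support fun x : ℝ => sinc (x/c) ^ (2*k)) :=
    (G_cont c k).isOpen_support
  apply hopen.measure_pos volume
  refine ⟨0, ?_⟩
  simp [Function.mem_support, zero_div, sinc_zero]

end Part2

lemma fourier_smul (r : ℂ) (f : ℝ → ℂ) (w : ℝ) :
    𝓕 (fun x => r * f x) w = r * 𝓕 f w := by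
  rw [Real.fourier_real_eq_integral_exp_smul,
    Real.fourier_real_eq_integral_exp_smul]
  simp_rw [smul_eq_mul]
  rw [← MeasureTheory.integral_const_mul]
  congr 1
  funext v
  ring

lemma tsum_G (c : ℝ) {k : ℕ} (hk : 1 ≤ k) (hc2 : 2 * (k:ℝ) < c) (y : ℝ) :
    ∑' j : ℤ, sinc ((y - (j:ℝ))/c) ^ (2*k) = ∫ u : ℝ, sinc (u/c) ^ (2*k) := by
  have hkpos : (0:ℝ) < k := by exact_mod_cast hk
  have hc : 0 < c := lt_trans (by linarith) hc2
  set G : ℝ → ℝ := fun x => sinc (x/c) ^ (2*k) with hG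
  set F : ℝ → ℂ := fun x => ((G x : ℝ) : ℂ) with hF
  set m : ℕ := 2*k - 1 with hm
  have hm1 : m + 1 = 2*k := by omega
  set H : ℝ → ℂ := convPow (bump c) m with hH
  have hHint : Integrable H := integrable_convPow c m
  have hGint : Integrable G := integrable_G hc hk
  have hFint : Integrable F := hGint.ofReal
  have hcC : ((c:ℝ):ℂ) ≠ 0 := Complex.ofReal_ne_zero.2 hc.ne'
  have hFH : ∀ x : ℝ, 𝓕 H x = ((c:ℂ))⁻¹ ^ (2*k) * F x := by
    intro x
    rw [hH, fourier_convPow c hc m x, hm1, hF, hG]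
    push_cast
    rw [mul_pow]
  have hFHfun : 𝓕 H = fun x => ((c:ℂ))⁻¹ ^ (2*k) * F x := funext hFH
  have hFHint : Integrable (𝓕 H) := by
    rw [hFHfun]; exact hFint.const_mul _
  have hFfun : F = fun x => ((c:ℂ)) ^ (2*k) * 𝓕 H x := by
    funext x
    rw [hFH x]
    field_simp
    rw [one_div, mul_assoc, ← mul_pow, mul_inv_cancel₀ hcC, one_pow, mul_one]
  -- H vanishes in a neighbourhood of every point with 1/2 ≤ |x|
  have hsupport : ∀ x : ℝ, 1/2 ≤ |x| → ∀ᶠ z in nhds x, H z = 0 := by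
    intro x hx
    have hopen : IsOpen {z : ℝ | ((m:ℝ)+1) * (1/(2*c)) < |z|} :=
      isOpen_lt continuous_const continuous_abs
    have hmem : x ∈ {z : ℝ | ((m:ℝ)+1) * (1/(2*c)) < |z|} := by
      have hcast : ((m:ℝ)+1) = 2*(k:ℝ) := by
        exact_mod_cast hm1
      show ((m:ℝ)+1) * (1/(2*c)) < |x|
      rw [hcast]
      have h1 : 2*(k:ℝ) * (1/(2*c)) = k/c := by field_simp
      rw [h1]
      have h2 : (k:ℝ)/c < 1/2 := by
        rw [div_lt_iff₀ hc]
        linarith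
      linarith
    filter_upwards [hopen.mem_nhds hmem] with z hz
    by_contra hne
    have hmem2 := support_convPow c m (Function.mem_support.2 hne)
    have : |z| ≤ ((m:ℝ)+1) * (1/(2*c)) := by
      rw [abs_le]
      constructor
      · linarith [hmem2.1]
      · linarith [hmem2.2]
    exact absurd this (not_le.2 hz)
  have hFvanish : ∀ x : ℝ, 1/2 ≤ |x| → 𝓕 F x = 0 := by
    intro x hx
    have hev : ∀ᶠ z in nhds (-x), H z = 0 := hsupport (-x) (by rwa [abs_neg])
    have hcontH : ContinuousAt H (-x) := by
      rw [continuousAt_congr hev]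
      exact continuousAt_const
    have hinv : 𝓕 (𝓕 H) x = H (-x) := by
      have h := hHint.fourierInv_fourier_eq hFHint hcontH
      rw [Real.fourierInv_eq_fourier_neg, neg_neg] at h
      exact h
    have hHx : H (-x) = 0 := hev.self_of_nhds
    rw [hFfun]
    rw [fourier_smul]
    rw [hinv, hHx, mul_zero]
  -- Fourier transform of F at 0 is the integral of G
  have hF0 : 𝓕 F 0 = ((∫ x : ℝ, G x : ℝ) : ℂ) := by
    rw [Real.fourier_real_eq_integral_exp_smul]
    simp only [mul_zero, Complex.ofReal_zero, zero_mul, Complex.exp_zero, one_smul]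
    exact integral_ofReal
  -- decay assumptions for Poisson summation
  have hFcont : Continuous F := Complex.continuous_ofReal.comp (G_cont c k)
  have habs : ∀ x : ℝ, x ≠ 0 → |x| ^ (-2:ℝ) = (x^2)⁻¹ := by
    intro x hx
    rw [show (-2:ℝ) = -((2:ℕ):ℝ) by norm_num, Real.rpow_neg (abs_nonneg x),
      Real.rpow_natCast, _root_.sq_abs]
  have hbigO : F =O[Filter.cocompact ℝ] (fun x : ℝ => |x| ^ (-2:ℝ)) := by
    rw [Asymptotics.isBigO_iff]
    refine ⟨c^2/π^2, ?_⟩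
    have hev : ∀ᶠ x : ℝ in Filter.cocompact ℝ, 1 ≤ |x| := by
      rw [cocompact_eq_atBot_atTop, Filter.eventually_sup]
      constructor
      · filter_upwards [Filter.eventually_le_atBot (-1:ℝ)] with x hx
        rw [abs_of_nonpos (by linarith)]; linarith
      · filter_upwards [Filter.eventually_ge_atTop (1:ℝ)] with x hx
        rw [_root_.abs_of_nonneg (by linarith)]; linarith
    filter_upwards [hev] with x hx
    have hxne : x ≠ 0 := by
      intro h; rw [h] at hx; simp at hx; linarith
    have hx2 : (0:ℝ) < x^2 := by positivity
    rw [hF, Complex.norm_real, Real.norm_eq_abs, Real.norm_eq_abs, habs x hxne,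
      _root_.abs_of_nonneg (G_nonneg c k x), _root_.abs_of_nonneg (by positivity : (0:ℝ) ≤ (x^2)⁻¹)]
    rw [← div_eq_mul_inv, le_div_iff₀ hx2]
    calc sinc (x/c)^(2*k) * x^2 ≤ sinc (x/c)^2 * x^2 :=
          mul_le_mul_of_nonneg_right (G_le_sq c hk x) (sq_nonneg x)
    _ ≤ c^2/π^2 := G_sq_bound hc x
  have hFbigO : (𝓕 F) =O[Filter.cocompact ℝ] (fun x : ℝ => |x| ^ (-2:ℝ)) := by
    rw [Asymptotics.isBigO_iff]
    refine ⟨0, ?_⟩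
    have hev : ∀ᶠ x : ℝ in Filter.cocompact ℝ, 1/2 ≤ |x| := by
      rw [cocompact_eq_atBot_atTop, Filter.eventually_sup]
      constructor
      · filter_upwards [Filter.eventually_le_atBot (-1:ℝ)] with x hx
        rw [abs_of_nonpos (by linarith)]; linarith
      · filter_upwards [Filter.eventually_ge_atTop (1:ℝ)] with x hx
        rw [_root_.abs_of_nonneg (by linarith)]; linarith
    filter_upwards [hev] with x hx
    rw [hFvanish x hx]
    simp
  -- Poisson summation
  have hpoisson := Real.tsum_eq_tsum_fourier_of_rpow_decay hFcont one_lt_two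
    (by exact_mod_cast hbigO) (by exact_mod_cast hFbigO) y
  -- RHS reduces to the integral
  have hRHS : ∑' n : ℤ, 𝓕 F n * fourier n (y : UnitAddCircle) = ((∫ x : ℝ, G x : ℝ) : ℂ) := by
    rw [tsum_eq_single 0 ?_]
    · simp only [Int.cast_zero, hF0, fourier_zero, mul_one]
    · intro n hn
      have h1 : (1:ℝ) ≤ |(n:ℝ)| := by
        rw [← Int.cast_abs]
        exact_mod_cast Int.one_le_abs hn
      rw [hFvanish n (by linarith), zero_mul]
  -- LHS is the sum over shifts
  have hLHS : ∑' n : ℤ, F (y + n) = ((∑' j : ℤ, G (y - (j:ℝ)) : ℝ) : ℂ) := by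
    rw [Complex.ofReal_tsum]
    rw [← (Equiv.neg ℤ).tsum_eq (fun n : ℤ => F (y + n))]
    congr 1
    funext j
    simp only [Equiv.neg_apply, Int.cast_neg, hF]
    norm_num [sub_eq_add_neg]
  rw [hLHS, hRHS] at hpoisson
  exact_mod_cast hpoisson

theorem stmt12 (k : ℕ) (hk : 1 ≤ k) (α : ℝ) (hα : 1 ≤ α) :
    ∀ y : ℝ, ∑' j : ℤ, jackson k α (y - (j : ℝ)) = 1 := by
  intro y
  have hkR : (1:ℝ) ≤ (k:ℝ) := by exact_mod_cast hk
  have hπ : (3:ℝ) < π := Real.pi_gt_three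
  have hπα : (3:ℝ) ≤ π * α := by nlinarith
  have h3 : 2 * (k:ℝ) * 3 ≤ 2 * k * π * α := by
    nlinarith [mul_le_mul_of_nonneg_left hπα (show (0:ℝ) ≤ 2*(k:ℝ) by linarith)]
  have hc2 : 2 * (k:ℝ) < 2 * k * π * α := by nlinarith
  have hc : (0:ℝ) < 2 * k * π * α := by nlinarith
  unfold jackson
  rw [tsum_mul_left]
  rw [tsum_G (2 * (k:ℝ) * π * α) hk hc2 y]
  exact inv_mul_cancel₀ (ne_of_gt (integral_G_pos hc hk))
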